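/- Fix disjoint i-element subsets M = {m_1,...,m_i} and M' = {m_1',...,m_i'} of {1,...,n} with n ≥ w + i and w ≥ i. Define f^{i,w,n} on w-subsets x of {1,...,n} by: f^{i,w,n}(x) = (-1)^{|x ∩ M|} if |x ∩ (M ∪ M')| = i and for every k ∈ {1,...,i} exactly one of m_k, m_k' lies in x; otherwise f^{i,w,n}(x) = 0. Then f^{i,w,n} is an eigenfunction of the Johnson graph J(n,w) with eigenvalue (w-i)(n-w-i) - i. -/

import Mathlib

open Finset

noncomputable def steinerFun (n i : ℕ) (m m' : Fin i → Fin n)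
    (x : Finset (Fin n)) : ℝ :=
  if ∀ k : Fin i, Xor (m k ∈ x) (m' k ∈ x) then
    (-1 : ℝ) ^ ((x ∩ Finset.image m Finset.univ).card)
  else 0

namespace SteinerAux

variable {n i : ℕ} {m m' : Fin i → Fin n} {x : Finset (Fin n)}

def Good (m m' : Fin i → Fin n) (x : Finset (Fin n)) : Prop :=
  ∀ k : Fin i, Xor' (m k ∈ x) (m' k ∈ x)

lemma f_good (h : Good m m' x) :
    steinerFun n i m m' x = (-1 : ℝ) ^ ((x ∩ Finset.image m Finset.univ).card) := by
  simp only [steinerFun]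
  split
  · rfl
  · exact absurd h ‹_›

lemma f_bad (h : ¬ Good m m' x) : steinerFun n i m m' x = 0 := by
  simp only [steinerFun]
  split
  · exact absurd ‹_› h
  · rfl

section inj
variable (hinj : Function.Injective (Sum.elim m m'))
include hinj

lemma ne_mm' (k l : Fin i) : m k ≠ m' l := fun h => by
  have := hinj (a₁ := Sum.inl k) (a₂ := Sum.inr l) h
  simp at this

lemma m_inj : Function.Injective m := fun k l h => by
  have := hinj (a₁ := Sum.inl k) (a₂ := Sum.inl l) h
  simpa using this

lemma m'_inj : Function.Injective m' := fun k l h => by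
  have := hinj (a₁ := Sum.inr k) (a₂ := Sum.inr l) h
  simpa using this

end inj

lemma mem_ie {a b c : Fin n} : c ∈ insert b (x.erase a) ↔ c = b ∨ (c ∈ x ∧ c ≠ a) := by
  simp only [Finset.mem_insert, Finset.mem_erase]
  tauto

lemma pow_card_erase {s : Finset (Fin n)} {e : Fin n} (he : e ∈ s) :
    (-1 : ℝ) ^ ((s.erase e).card) = -(-1 : ℝ) ^ s.card := by
  have h1 : 1 ≤ s.card := Finset.card_pos.mpr ⟨e, he⟩
  have h2 : s.card = (s.erase e).card + 1 := by
    rw [Finset.card_erase_of_mem he]; omega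
  rw [h2, pow_succ]; ring

lemma pow_card_insert {s : Finset (Fin n)} {e : Fin n} (he : e ∉ s) :
    (-1 : ℝ) ^ ((insert e s).card) = -(-1 : ℝ) ^ s.card := by
  rw [Finset.card_insert_of_notMem he, pow_succ]; ring


lemma card_insert_erase {a b : Fin n} (ha : a ∈ x) (hb : b ∉ x) :
    (insert b (x.erase a)).card = x.card := by
  rw [Finset.card_insert_of_notMem (fun h => hb (Finset.mem_of_mem_erase h)),
    Finset.card_erase_of_mem ha]
  have : 1 ≤ x.card := Finset.card_pos.mpr ⟨a, ha⟩
  omega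

lemma inter_insert_erase {a b : Fin n} (ha : a ∈ x) (hb : b ∉ x) :
    x ∩ insert b (x.erase a) = x.erase a := by
  ext c
  simp only [Finset.mem_inter, mem_ie, Finset.mem_erase]
  constructor
  · rintro ⟨hc, hc' | hc'⟩
    · exact absurd (hc' ▸ hc) hb
    · exact ⟨hc'.2, hc⟩
  · rintro ⟨hne, hc⟩
    exact ⟨hc, Or.inr ⟨hc, hne⟩⟩

lemma neighbor_filter_eq {w : ℕ} (hx : x.card = w) :
    univ.filter (fun y : Finset (Fin n) => y.card = w ∧ (x ∩ y).card + 1 = w)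
      = (x ×ˢ xᶜ).image (fun p => insert p.2 (x.erase p.1)) := by
  ext y
  simp only [Finset.mem_filter, Finset.mem_image, Finset.mem_product, Finset.mem_univ,
    true_and, Finset.mem_compl, Prod.exists]
  constructor
  · rintro ⟨hy1, hy2⟩
    have hxy : (x \ y).card + (x ∩ y).card = x.card := Finset.card_sdiff_add_card_inter x y
    have hyx : (y \ x).card + (y ∩ x).card = y.card := Finset.card_sdiff_add_card_inter y x
    rw [Finset.inter_comm] at hyx
    have h1 : (x \ y).card = 1 := by omega
    have h2 : (y \ x).card = 1 := by omega
    obtain ⟨a, ha⟩ := Finset.card_eq_one.mp h1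
    obtain ⟨b, hb⟩ := Finset.card_eq_one.mp h2
    have hax : a ∈ x ∧ a ∉ y := by
      have : a ∈ x \ y := ha ▸ Finset.mem_singleton_self a
      exact ⟨(Finset.mem_sdiff.mp this).1, (Finset.mem_sdiff.mp this).2⟩
    have hbx : b ∈ y ∧ b ∉ x := by
      have : b ∈ y \ x := hb ▸ Finset.mem_singleton_self b
      exact ⟨(Finset.mem_sdiff.mp this).1, (Finset.mem_sdiff.mp this).2⟩
    refine ⟨a, b, ⟨hax.1, hbx.2⟩, ?_⟩
    ext c
    rw [mem_ie]
    constructor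
    · rintro (rfl | ⟨hcx, hca⟩)
      · exact hbx.1
      · by_contra hcy
        have : c ∈ x \ y := Finset.mem_sdiff.mpr ⟨hcx, hcy⟩
        rw [ha, Finset.mem_singleton] at this
        exact hca this
    · intro hcy
      by_cases hcx : c ∈ x
      · refine Or.inr ⟨hcx, fun h => hax.2 (h ▸ hcy)⟩
      · left
        have : c ∈ y \ x := Finset.mem_sdiff.mpr ⟨hcy, hcx⟩
        rw [hb, Finset.mem_singleton] at this
        exact this
  · rintro ⟨a, b, ⟨ha, hb⟩, rfl⟩
    refine ⟨by rw [card_insert_erase ha hb, hx], ?_⟩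
    rw [inter_insert_erase ha hb, Finset.card_erase_of_mem ha, hx]
    have : 1 ≤ w := hx ▸ Finset.card_pos.mpr ⟨a, ha⟩
    omega

lemma insert_erase_injOn :
    Set.InjOn (fun p : Fin n × Fin n => insert p.2 (x.erase p.1)) (x ×ˢ xᶜ) := by
  rintro ⟨a, b⟩ hab ⟨a', b'⟩ hab' h
  simp only [Finset.coe_product, Set.mem_prod, Finset.mem_coe, Finset.mem_compl] at hab hab'
  obtain ⟨ha, hb⟩ := hab
  obtain ⟨ha', hb'⟩ := hab'
  simp only at h
  have hbb : b' = b := by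
    have : b' ∈ insert b (x.erase a) := h ▸ Finset.mem_insert_self b' (x.erase a')
    rcases mem_ie.mp this with h1 | h1
    · exact h1
    · exact absurd h1.1 hb'
  have haa : a' = a := by
    by_contra hne
    have : a' ∈ insert b (x.erase a) := by
      rw [mem_ie]; exact Or.inr ⟨ha', hne⟩
    rw [h, mem_ie] at this
    rcases this with h1 | h1
    · exact hb' (h1 ▸ ha')
    · exact h1.2 rfl
  rw [haa, hbb]

lemma neighbor_sum (f : Finset (Fin n) → ℝ) {w : ℕ} (hx : x.card = w) :
    ∑ y ∈ univ.filter (fun y : Finset (Fin n) => y.card = w ∧ (x ∩ y).card + 1 = w), f y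
      = ∑ a ∈ x, ∑ b ∈ xᶜ, f (insert b (x.erase a)) := by
  rw [neighbor_filter_eq hx, Finset.sum_image (fun p hp q hq h =>
    insert_erase_injOn (by simpa using hp) (by simpa using hq) h), Finset.sum_product]


lemma xor_congr {p q p' q' : Prop} (hp : p ↔ p') (hq : q ↔ q') :
    Xor' p q ↔ Xor' p' q' := by unfold Xor' Xor; tauto

lemma bad_both {y : Finset (Fin n)} {j : Fin i} (hj : m j ∈ y) (hj' : m' j ∈ y) :
    ¬ Good m m' y := fun h => by have := h j; unfold Xor' Xor at this; tauto

lemma bad_both_out {y : Finset (Fin n)} {j : Fin i} (hj : m j ∉ y) (hj' : m' j ∉ y) :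
    ¬ Good m m' y := fun h => by have := h j; unfold Xor' Xor at this; tauto

lemma mem_S {c : Fin n} :
    c ∈ Finset.image (Sum.elim m m') Finset.univ ↔ (∃ k, m k = c) ∨ (∃ k, m' k = c) := by
  simp [Finset.mem_image, Sum.exists]

section withInj
variable (hinj : Function.Injective (Sum.elim m m'))
include hinj

/-- V1: both `a` and `b` outside the paired set. -/
lemma val_outside (hx : Good m m' x) {a b : Fin n} (ha : a ∈ x) (hb : b ∉ x)
    (haS : ∀ k, m k ≠ a ∧ m' k ≠ a) (hbS : ∀ k, m k ≠ b ∧ m' k ≠ b) :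
    steinerFun n i m m' (insert b (x.erase a))
      = (-1 : ℝ) ^ ((x ∩ Finset.image m Finset.univ).card) := by
  have hgood : Good m m' (insert b (x.erase a)) := by
    intro k
    have h1 : m k ∈ insert b (x.erase a) ↔ m k ∈ x := by
      rw [mem_ie]
      have := (haS k).1; have := (hbS k).1
      tauto
    have h2 : m' k ∈ insert b (x.erase a) ↔ m' k ∈ x := by
      rw [mem_ie]
      have := (haS k).2; have := (hbS k).2
      tauto
    exact (xor_congr h1 h2).mpr (hx k)
  have hint : insert b (x.erase a) ∩ Finset.image m Finset.univ
      = x ∩ Finset.image m Finset.univ := by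
    ext c
    simp only [Finset.mem_inter, mem_ie, Finset.mem_image, Finset.mem_univ, true_and]
    constructor
    · rintro ⟨hc, k, rfl⟩
      rcases hc with h1 | h1
      · exact absurd h1 (hbS k).1
      · exact ⟨h1.1, k, rfl⟩
    · rintro ⟨hc, k, rfl⟩
      exact ⟨Or.inr ⟨hc, (haS k).1⟩, k, rfl⟩
  rw [f_good hgood, hint]

/-- V4: remove `m k`, insert its partner `m' k`. -/
lemma val_swap_m (hx : Good m m' x) (k : Fin i) (hk : m k ∈ x) :
    steinerFun n i m m' (insert (m' k) (x.erase (m k)))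
      = -(-1 : ℝ) ^ ((x ∩ Finset.image m Finset.univ).card) := by
  have hk' : m' k ∉ x := by have := hx k; unfold Xor' Xor at this; tauto
  have hgood : Good m m' (insert (m' k) (x.erase (m k))) := by
    intro j
    by_cases hj : j = k
    · subst hj
      refine Or.inr ⟨Finset.mem_insert_self _ _, ?_⟩
      intro hmem
      rcases mem_ie.mp hmem with h | h
      · exact ne_mm' hinj j j h
      · exact h.2 rfl
    · have h1 : m j ∈ insert (m' k) (x.erase (m k)) ↔ m j ∈ x := by
        rw [mem_ie]
        have e1 := ne_mm' hinj j k
        have e2 : m j ≠ m k := fun h => hj (m_inj hinj h)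
        tauto
      have h2 : m' j ∈ insert (m' k) (x.erase (m k)) ↔ m' j ∈ x := by
        rw [mem_ie]
        have e1 : m' j ≠ m' k := fun h => hj (m'_inj hinj h)
        have e2 : m' j ≠ m k := fun h => ne_mm' hinj k j h.symm
        tauto
      exact (xor_congr h1 h2).mpr (hx j)
  have hint : insert (m' k) (x.erase (m k)) ∩ Finset.image m Finset.univ
      = (x ∩ Finset.image m Finset.univ).erase (m k) := by
    ext c
    simp only [Finset.mem_inter, mem_ie, Finset.mem_erase, Finset.mem_image,
      Finset.mem_univ, true_and]
    constructor
    · rintro ⟨hc, j, rfl⟩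
      rcases hc with h1 | h1
      · exact absurd h1 (ne_mm' hinj j k)
      · exact ⟨h1.2, h1.1, j, rfl⟩
    · rintro ⟨hne, hcx, j, rfl⟩
      exact ⟨Or.inr ⟨hcx, hne⟩, j, rfl⟩
  rw [f_good hgood, hint, pow_card_erase (Finset.mem_inter.mpr
    ⟨hk, Finset.mem_image.mpr ⟨k, Finset.mem_univ k, rfl⟩⟩)]

/-- V5: remove `m' k`, insert its partner `m k`. -/
lemma val_swap_m' (hx : Good m m' x) (k : Fin i) (hk : m' k ∈ x) :
    steinerFun n i m m' (insert (m k) (x.erase (m' k)))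
      = -(-1 : ℝ) ^ ((x ∩ Finset.image m Finset.univ).card) := by
  have hk' : m k ∉ x := by have := hx k; unfold Xor' Xor at this; tauto
  have hgood : Good m m' (insert (m k) (x.erase (m' k))) := by
    intro j
    by_cases hj : j = k
    · subst hj
      refine Or.inl ⟨Finset.mem_insert_self _ _, ?_⟩
      intro hmem
      rcases mem_ie.mp hmem with h | h
      · exact ne_mm' hinj j j h.symm
      · exact h.2 rfl
    · have h1 : m j ∈ insert (m k) (x.erase (m' k)) ↔ m j ∈ x := by
        rw [mem_ie]
        have e1 : m j ≠ m k := fun h => hj (m_inj hinj h)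
        have e2 : m j ≠ m' k := ne_mm' hinj j k
        tauto
      have h2 : m' j ∈ insert (m k) (x.erase (m' k)) ↔ m' j ∈ x := by
        rw [mem_ie]
        have e1 : m' j ≠ m k := fun h => ne_mm' hinj k j h.symm
        have e2 : m' j ≠ m' k := fun h => hj (m'_inj hinj h)
        tauto
      exact (xor_congr h1 h2).mpr (hx j)
  have hmem : m k ∉ x ∩ Finset.image m Finset.univ := fun h =>
    hk' (Finset.mem_inter.mp h).1
  have hint : insert (m k) (x.erase (m' k)) ∩ Finset.image m Finset.univ
      = insert (m k) (x ∩ Finset.image m Finset.univ) := by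
    ext c
    simp only [Finset.mem_inter, Finset.mem_insert, Finset.mem_erase, Finset.mem_image,
      Finset.mem_univ, true_and]
    constructor
    · rintro ⟨hc, j, rfl⟩
      rcases hc with h1 | h1
      · exact Or.inl h1
      · exact Or.inr ⟨h1.2, j, rfl⟩
    · rintro (rfl | ⟨hcx, j, rfl⟩)
      · exact ⟨Or.inl rfl, k, rfl⟩
      · exact ⟨Or.inr ⟨ne_mm' hinj j k, hcx⟩, j, rfl⟩
  rw [f_good hgood, hint, pow_card_insert hmem]

end withInj

/-- z1: remove `m k`, insert something other than the partner. -/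
lemma zero_remove_m (hx : Good m m' x) {k : Fin i} {b : Fin n} (hk : m k ∈ x)
    (hb : b ∉ x) (hbne : b ≠ m' k) :
    steinerFun n i m m' (insert b (x.erase (m k))) = 0 := by
  have hk' : m' k ∉ x := by have := hx k; unfold Xor' Xor at this; tauto
  refine f_bad (bad_both_out (j := k) ?_ ?_)
  · intro hmem
    rcases mem_ie.mp hmem with h | h
    · exact hb (h ▸ hk)
    · exact h.2 rfl
  · intro hmem
    rcases mem_ie.mp hmem with h | h
    · exact hbne h.symm
    · exact hk' h.1

/-- z2: remove `m' k`, insert something other than the partner. -/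
lemma zero_remove_m' (hx : Good m m' x) {k : Fin i} {b : Fin n} (hk : m' k ∈ x)
    (hb : b ∉ x) (hbne : b ≠ m k) :
    steinerFun n i m m' (insert b (x.erase (m' k))) = 0 := by
  have hk' : m k ∉ x := by have := hx k; unfold Xor' Xor at this; tauto
  refine f_bad (bad_both_out (j := k) ?_ ?_)
  · intro hmem
    rcases mem_ie.mp hmem with h | h
    · exact hbne h.symm
    · exact hk' h.1
  · intro hmem
    rcases mem_ie.mp hmem with h | h
    · exact hb (h ▸ hk)
    · exact h.2 rfl

/-- z3: insert `m j` when its partner `m' j` stays in `x`. -/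
lemma zero_insert_m {j : Fin i} {a : Fin n} (hbj : m' j ∈ x) (hane : a ≠ m' j) :
    steinerFun n i m m' (insert (m j) (x.erase a)) = 0 := by
  refine f_bad (bad_both (j := j) (Finset.mem_insert_self _ _) ?_)
  rw [mem_ie]
  exact Or.inr ⟨hbj, fun h => hane h.symm⟩

/-- z4: insert `m' j` when its partner `m j` stays in `x`. -/
lemma zero_insert_m' {j : Fin i} {a : Fin n} (hbj : m j ∈ x) (hane : a ≠ m j) :
    steinerFun n i m m' (insert (m' j) (x.erase a)) = 0 := by
  refine f_bad (bad_both (j := j) ?_ (Finset.mem_insert_self _ _))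
  rw [mem_ie]
  exact Or.inr ⟨hbj, fun h => hane h.symm⟩

lemma bad_fixed_in {k : Fin i} {a b : Fin n} (hk : m k ∈ x) (hk' : m' k ∈ x)
    (ha1 : a ≠ m k) (ha2 : a ≠ m' k) :
    steinerFun n i m m' (insert b (x.erase a)) = 0 := by
  refine f_bad (bad_both (j := k) ?_ ?_)
  · rw [mem_ie]; exact Or.inr ⟨hk, fun h => ha1 h.symm⟩
  · rw [mem_ie]; exact Or.inr ⟨hk', fun h => ha2 h.symm⟩

lemma bad_fixed_out {k : Fin i} {a b : Fin n} (hk : m k ∉ x) (hk' : m' k ∉ x)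
    (hb1 : b ≠ m k) (hb2 : b ≠ m' k) :
    steinerFun n i m m' (insert b (x.erase a)) = 0 := by
  refine f_bad (bad_both_out (j := k) ?_ ?_)
  · intro hmem
    rcases mem_ie.mp hmem with h | h
    · exact hb1 h.symm
    · exact hk h.1
  · intro hmem
    rcases mem_ie.mp hmem with h | h
    · exact hb2 h.symm
    · exact hk' h.1


section core
variable (hinj : Function.Injective (Sum.elim m m'))
include hinj

/-- Removing `m' k` instead of `m k` (both in `x`) flips the sign. -/
lemma core_remove {k : Fin i} {b : Fin n} (hk : m k ∈ x) (hk' : m' k ∈ x) (hb : b ∉ x) :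
    steinerFun n i m m' (insert b (x.erase (m' k)))
      = - steinerFun n i m m' (insert b (x.erase (m k))) := by
  set y1 := insert b (x.erase (m k)) with hy1
  set y2 := insert b (x.erase (m' k)) with hy2
  have hbm : b ≠ m k := fun h => hb (h ▸ hk)
  have hbm' : b ≠ m' k := fun h => hb (h ▸ hk')
  have hmk_y1 : m k ∉ y1 := by
    intro hmem
    rcases mem_ie.mp hmem with h | h
    · exact hbm h.symm
    · exact h.2 rfl
  have hmk'_y1 : m' k ∈ y1 := mem_ie.mpr (Or.inr ⟨hk', fun h => ne_mm' hinj k k h.symm⟩)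
  have hmk_y2 : m k ∈ y2 := mem_ie.mpr (Or.inr ⟨hk, ne_mm' hinj k k⟩)
  have hmk'_y2 : m' k ∉ y2 := by
    intro hmem
    rcases mem_ie.mp hmem with h | h
    · exact hbm' h.symm
    · exact h.2 rfl
  have hm_mem : ∀ j, j ≠ k → (m j ∈ y1 ↔ m j ∈ y2) := by
    intro j hj
    rw [mem_ie, mem_ie]
    have e1 : m j ≠ m k := fun h => hj (m_inj hinj h)
    have e2 : m j ≠ m' k := ne_mm' hinj j k
    tauto
  have hm'_mem : ∀ j, j ≠ k → (m' j ∈ y1 ↔ m' j ∈ y2) := by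
    intro j hj
    rw [mem_ie, mem_ie]
    have e1 : m' j ≠ m k := fun h => ne_mm' hinj k j h.symm
    have e2 : m' j ≠ m' k := fun h => hj (m'_inj hinj h)
    tauto
  have hgoodiff : Good m m' y1 ↔ Good m m' y2 := by
    constructor
    · intro h j
      by_cases hj : j = k
      · subst hj
        exact Or.inl ⟨hmk_y2, hmk'_y2⟩
      · exact (xor_congr (hm_mem j hj) (hm'_mem j hj)).mp (h j)
    · intro h j
      by_cases hj : j = k
      · subst hj
        exact Or.inr ⟨hmk'_y1, hmk_y1⟩
      · exact (xor_congr (hm_mem j hj) (hm'_mem j hj)).mpr (h j)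
  have hmky1M : m k ∉ y1 ∩ Finset.image m Finset.univ := fun h =>
    hmk_y1 (Finset.mem_inter.mp h).1
  have hint : y2 ∩ Finset.image m Finset.univ
      = insert (m k) (y1 ∩ Finset.image m Finset.univ) := by
    ext c
    simp only [Finset.mem_inter, Finset.mem_insert, Finset.mem_image,
      Finset.mem_univ, true_and]
    constructor
    · rintro ⟨hc, j, rfl⟩
      by_cases hj : j = k
      · subst hj
        exact Or.inl rfl
      · exact Or.inr ⟨(hm_mem j hj).mpr hc, j, rfl⟩
    · rintro (rfl | ⟨hc, j, rfl⟩)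
      · exact ⟨hmk_y2, k, rfl⟩
      · have hj : j ≠ k := fun h => hmk_y1 (h ▸ hc)
        exact ⟨(hm_mem j hj).mp hc, j, rfl⟩
  by_cases hg : Good m m' y1
  · rw [f_good (hgoodiff.mp hg), f_good hg, hint, pow_card_insert hmky1M]
  · rw [f_bad (fun h => hg (hgoodiff.mpr h)), f_bad hg, neg_zero]

/-- Inserting `m' k` instead of `m k` (both outside `x`) flips the sign. -/
lemma core_add {k : Fin i} {a : Fin n} (hk : m k ∉ x) (hk' : m' k ∉ x) :
    steinerFun n i m m' (insert (m' k) (x.erase a))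
      = - steinerFun n i m m' (insert (m k) (x.erase a)) := by
  set y1 := insert (m k) (x.erase a) with hy1
  set y2 := insert (m' k) (x.erase a) with hy2
  have hmk_y1 : m k ∈ y1 := Finset.mem_insert_self _ _
  have hmk'_y1 : m' k ∉ y1 := by
    intro hmem
    rcases mem_ie.mp hmem with h | h
    · exact ne_mm' hinj k k h.symm
    · exact hk' h.1
  have hmk'_y2 : m' k ∈ y2 := Finset.mem_insert_self _ _
  have hmk_y2 : m k ∉ y2 := by
    intro hmem
    rcases mem_ie.mp hmem with h | h
    · exact ne_mm' hinj k k h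
    · exact hk h.1
  have hm_mem : ∀ j, j ≠ k → (m j ∈ y1 ↔ m j ∈ y2) := by
    intro j hj
    rw [mem_ie, mem_ie]
    have e1 : m j ≠ m k := fun h => hj (m_inj hinj h)
    have e2 : m j ≠ m' k := ne_mm' hinj j k
    tauto
  have hm'_mem : ∀ j, j ≠ k → (m' j ∈ y1 ↔ m' j ∈ y2) := by
    intro j hj
    rw [mem_ie, mem_ie]
    have e1 : m' j ≠ m k := fun h => ne_mm' hinj k j h.symm
    have e2 : m' j ≠ m' k := fun h => hj (m'_inj hinj h)
    tauto
  have hgoodiff : Good m m' y1 ↔ Good m m' y2 := by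
    constructor
    · intro h j
      by_cases hj : j = k
      · subst hj
        exact Or.inr ⟨hmk'_y2, hmk_y2⟩
      · exact (xor_congr (hm_mem j hj) (hm'_mem j hj)).mp (h j)
    · intro h j
      by_cases hj : j = k
      · subst hj
        exact Or.inl ⟨hmk_y1, hmk'_y1⟩
      · exact (xor_congr (hm_mem j hj) (hm'_mem j hj)).mpr (h j)
  have hmky2M : m k ∉ y2 ∩ Finset.image m Finset.univ := fun h =>
    hmk_y2 (Finset.mem_inter.mp h).1
  have hint : y1 ∩ Finset.image m Finset.univ
      = insert (m k) (y2 ∩ Finset.image m Finset.univ) := by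
    ext c
    simp only [Finset.mem_inter, Finset.mem_insert, Finset.mem_image,
      Finset.mem_univ, true_and]
    constructor
    · rintro ⟨hc, j, rfl⟩
      by_cases hj : j = k
      · subst hj
        exact Or.inl rfl
      · exact Or.inr ⟨(hm_mem j hj).mp hc, j, rfl⟩
    · rintro (rfl | ⟨hc, j, rfl⟩)
      · exact ⟨hmk_y1, k, rfl⟩
      · have hj : j ≠ k := fun h => hmk_y2 (h ▸ hc)
        exact ⟨(hm_mem j hj).mpr hc, j, rfl⟩
  by_cases hg : Good m m' y2
  · have h1 : steinerFun n i m m' y1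
        = -(steinerFun n i m m' y2) := by
      rw [f_good (hgoodiff.mpr hg), f_good hg, hint, pow_card_insert hmky2M]
    rw [h1, neg_neg]
  · rw [f_bad (fun h => hg (hgoodiff.mp h)), f_bad hg, neg_zero]

end core


section cards
variable (hinj : Function.Injective (Sum.elim m m'))
include hinj

lemma card_S : (Finset.image (Sum.elim m m') Finset.univ : Finset (Fin n)).card = i + i := by
  rw [Finset.card_image_of_injective _ hinj, Finset.card_univ]
  simp

lemma card_x_inter_S (hx : Good m m' x) :
    (x.filter (fun c => c ∈ Finset.image (Sum.elim m m') Finset.univ)).card = i := by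
  have himg : x.filter (fun c => c ∈ Finset.image (Sum.elim m m') Finset.univ)
      = Finset.image (fun k => if m k ∈ x then m k else m' k) Finset.univ := by
    ext c
    rw [Finset.mem_filter, mem_S, Finset.mem_image]
    simp only [Finset.mem_univ, true_and]
    constructor
    · rintro ⟨hcx, ⟨k, rfl⟩ | ⟨k, rfl⟩⟩
      · exact ⟨k, if_pos hcx⟩
      · have : m k ∉ x := by have := hx k; unfold Xor' Xor at this; tauto
        exact ⟨k, if_neg this⟩
    · rintro ⟨k, rfl⟩
      by_cases hk : m k ∈ x
      · rw [if_pos hk]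
        exact ⟨hk, Or.inl ⟨k, rfl⟩⟩
      · rw [if_neg hk]
        have : m' k ∈ x := by have := hx k; unfold Xor' Xor at this; tauto
        exact ⟨this, Or.inr ⟨k, rfl⟩⟩
  rw [himg, Finset.card_image_of_injOn, Finset.card_univ, Fintype.card_fin]
  intro k _ l _ h
  simp only at h
  by_cases hk : m k ∈ x <;> by_cases hl : m l ∈ x
  · rw [if_pos hk, if_pos hl] at h
    exact m_inj hinj h
  · rw [if_pos hk, if_neg hl] at h
    exact absurd h (ne_mm' hinj k l)
  · rw [if_neg hk, if_pos hl] at h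
    exact absurd h.symm (ne_mm' hinj l k)
  · rw [if_neg hk, if_neg hl] at h
    exact m'_inj hinj h

lemma card_xc_inter_S (hx : Good m m' x) :
    (xᶜ.filter (fun c => c ∈ Finset.image (Sum.elim m m') Finset.univ)).card = i := by
  set S := (Finset.image (Sum.elim m m') Finset.univ : Finset (Fin n)) with hS
  have h1 : S.filter (fun c => c ∈ x) = x.filter (fun c => c ∈ S) := by
    ext c
    simp only [Finset.mem_filter]
    tauto
  have h2 : S.filter (fun c => c ∉ x) = xᶜ.filter (fun c => c ∈ S) := by
    ext c
    simp only [Finset.mem_filter, Finset.mem_compl]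
    tauto
  have h3 := Finset.card_filter_add_card_filter_not (s := S)
    (p := fun c => c ∈ x)
  rw [h1, h2] at h3
  rw [card_S hinj, card_x_inter_S hinj hx] at h3
  omega

end cards

lemma good_sum {w : ℕ} (hinj : Function.Injective (Sum.elim m m'))
    (hx : Good m m' x) (hcard : x.card = w) (hiw : i ≤ w) (hwn : w + i ≤ n) :
    ∑ a ∈ x, ∑ b ∈ xᶜ, steinerFun n i m m' (insert b (x.erase a))
      = (((w : ℝ) - i) * ((n : ℝ) - w - i) - i)
        * (-1 : ℝ) ^ ((x ∩ Finset.image m Finset.univ).card) := by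
  set S := (Finset.image (Sum.elim m m') Finset.univ : Finset (Fin n)) with hS
  set c := (x ∩ Finset.image m Finset.univ).card with hc
  rw [← Finset.sum_filter_add_sum_filter_not x (fun a => a ∈ S)]
  have hA : ∀ a ∈ x.filter (fun a => a ∈ S),
      (∑ b ∈ xᶜ, steinerFun n i m m' (insert b (x.erase a))) = -(-1 : ℝ) ^ c := by
    intro a haf
    rw [Finset.mem_filter] at haf
    obtain ⟨hax, haS⟩ := haf
    rcases mem_S.mp haS with ⟨k, rfl⟩ | ⟨k, rfl⟩
    · have hk' : m' k ∉ x := by have := hx k; unfold Xor' Xor at this; tauto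
      rw [Finset.sum_eq_single_of_mem (m' k) (Finset.mem_compl.mpr hk')]
      · exact val_swap_m hinj hx k hax
      · intro b hb hbne
        exact zero_remove_m hx hax (Finset.mem_compl.mp hb) hbne
    · have hk' : m k ∉ x := by have := hx k; unfold Xor' Xor at this; tauto
      rw [Finset.sum_eq_single_of_mem (m k) (Finset.mem_compl.mpr hk')]
      · exact val_swap_m' hinj hx k hax
      · intro b hb hbne
        exact zero_remove_m' hx hax (Finset.mem_compl.mp hb) hbne
  have hB : ∀ a ∈ x.filter (fun a => a ∉ S),
      (∑ b ∈ xᶜ, steinerFun n i m m' (insert b (x.erase a)))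
        = ((xᶜ.filter (fun b => b ∉ S)).card : ℝ) * (-1 : ℝ) ^ c := by
    intro a haf
    rw [Finset.mem_filter] at haf
    obtain ⟨hax, haS⟩ := haf
    have haS' : ∀ k, m k ≠ a ∧ m' k ≠ a := fun k =>
      ⟨fun h => haS (mem_S.mpr (Or.inl ⟨k, h⟩)),
       fun h => haS (mem_S.mpr (Or.inr ⟨k, h⟩))⟩
    have hstep : ∀ b ∈ xᶜ, steinerFun n i m m' (insert b (x.erase a))
        = if b ∈ S then 0 else (-1 : ℝ) ^ c := by
      intro b hb
      have hbx : b ∉ x := Finset.mem_compl.mp hb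
      by_cases hbS : b ∈ S
      · rw [if_pos hbS]
        rcases mem_S.mp hbS with ⟨j, rfl⟩ | ⟨j, rfl⟩
        · have hj : m' j ∈ x := by have := hx j; unfold Xor' Xor at this; tauto
          exact zero_insert_m hj (fun h => (haS' j).2 h.symm)
        · have hj : m j ∈ x := by have := hx j; unfold Xor' Xor at this; tauto
          exact zero_insert_m' hj (fun h => (haS' j).1 h.symm)
      · rw [if_neg hbS]
        have hbS' : ∀ k, m k ≠ b ∧ m' k ≠ b := fun k =>
          ⟨fun h => hbS (mem_S.mpr (Or.inl ⟨k, h⟩)),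
           fun h => hbS (mem_S.mpr (Or.inr ⟨k, h⟩))⟩
        exact val_outside hinj hx hax hbx haS' hbS'
    rw [Finset.sum_congr rfl hstep, Finset.sum_ite, Finset.sum_const_zero,
      Finset.sum_const, zero_add, nsmul_eq_mul]
  rw [Finset.sum_congr rfl hA, Finset.sum_congr rfl hB, Finset.sum_const,
    Finset.sum_const, nsmul_eq_mul, nsmul_eq_mul]
  have hxS : (x.filter (fun a => a ∈ S)).card = i := card_x_inter_S hinj hx
  have hxSc : (x.filter (fun a => a ∉ S)).card = w - i := by
    have := Finset.card_filter_add_card_filter_not (s := x) (p := fun a => a ∈ S)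
    rw [hxS, hcard] at this
    omega
  have hxc : xᶜ.card = n - w := by
    rw [Finset.card_compl, Fintype.card_fin, hcard]
  have hxcS : (xᶜ.filter (fun b => b ∈ S)).card = i := card_xc_inter_S hinj hx
  have hxcSc : (xᶜ.filter (fun b => b ∉ S)).card = n - w - i := by
    have := Finset.card_filter_add_card_filter_not (s := xᶜ) (p := fun b => b ∈ S)
    rw [hxcS, hxc] at this
    omega
  rw [hxS, hxSc, hxcSc, Nat.cast_sub hiw, Nat.cast_sub (by omega : i ≤ n - w),
    Nat.cast_sub (by omega : w ≤ n)]
  ring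


lemma bad_sum (hinj : Function.Injective (Sum.elim m m')) (hx : ¬ Good m m' x) :
    ∑ a ∈ x, ∑ b ∈ xᶜ, steinerFun n i m m' (insert b (x.erase a)) = 0 := by
  have hex : ∃ k, ¬ Xor' (m k ∈ x) (m' k ∈ x) := by
    by_contra h
    push_neg at h
    exact hx h
  obtain ⟨k, hk⟩ := hex
  have hcases : (m k ∈ x ∧ m' k ∈ x) ∨ (m k ∉ x ∧ m' k ∉ x) := by
    unfold Xor' Xor at hk; tauto
  set σ := Equiv.swap (m k) (m' k) with hσ
  rcases hcases with ⟨h1, h2⟩ | ⟨h1, h2⟩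
  · -- both in x : reindex the outer sum by the swap
    have hst : ∀ a : Fin n, a ∈ x ↔ σ a ∈ x := by
      intro a
      rcases eq_or_ne a (m k) with rfl | ha1
      · rw [hσ, Equiv.swap_apply_left]
        simp [h1, h2]
      rcases eq_or_ne a (m' k) with rfl | ha2
      · rw [hσ, Equiv.swap_apply_right]
        simp [h1, h2]
      · rw [hσ, Equiv.swap_apply_of_ne_of_ne ha1 ha2]
    have key : ∀ a ∈ x, (∑ b ∈ xᶜ, steinerFun n i m m' (insert b (x.erase (σ a))))
        = - ∑ b ∈ xᶜ, steinerFun n i m m' (insert b (x.erase a)) := by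
      intro a ha
      rcases eq_or_ne a (m k) with rfl | ha1
      · rw [hσ, Equiv.swap_apply_left, ← Finset.sum_neg_distrib]
        refine Finset.sum_congr rfl fun b hb => ?_
        exact core_remove hinj h1 h2 (Finset.mem_compl.mp hb)
      rcases eq_or_ne a (m' k) with rfl | ha2
      · rw [hσ, Equiv.swap_apply_right, ← Finset.sum_neg_distrib]
        refine Finset.sum_congr rfl fun b hb => ?_
        have := core_remove hinj h1 h2 (Finset.mem_compl.mp hb)
        linarith
      · rw [hσ, Equiv.swap_apply_of_ne_of_ne ha1 ha2]
        have hz : (∑ b ∈ xᶜ, steinerFun n i m m' (insert b (x.erase a))) = 0 :=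
          Finset.sum_eq_zero fun b _ => bad_fixed_in h1 h2 ha1 ha2
        rw [hz, neg_zero]
    have h0 : ∑ a ∈ x, (∑ b ∈ xᶜ, steinerFun n i m m' (insert b (x.erase (σ a))))
        = ∑ a ∈ x, ∑ b ∈ xᶜ, steinerFun n i m m' (insert b (x.erase a)) :=
      Finset.sum_equiv σ (fun a => hst a) (fun a _ => rfl)
    have h1' := Finset.sum_congr rfl key
    rw [Finset.sum_neg_distrib] at h1'
    linarith [h0, h1']
  · -- both outside x : reindex each inner sum by the swap
    refine Finset.sum_eq_zero fun a ha => ?_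
    have hst : ∀ b : Fin n, b ∈ xᶜ ↔ σ b ∈ xᶜ := by
      intro b
      rcases eq_or_ne b (m k) with rfl | hb1
      · rw [hσ, Equiv.swap_apply_left]
        simp [h1, h2]
      rcases eq_or_ne b (m' k) with rfl | hb2
      · rw [hσ, Equiv.swap_apply_right]
        simp [h1, h2]
      · rw [hσ, Equiv.swap_apply_of_ne_of_ne hb1 hb2]
    have key : ∀ b ∈ xᶜ, steinerFun n i m m' (insert (σ b) (x.erase a))
        = - steinerFun n i m m' (insert b (x.erase a)) := by
      intro b hb
      rcases eq_or_ne b (m k) with rfl | hb1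
      · rw [hσ, Equiv.swap_apply_left]
        exact core_add hinj h1 h2
      rcases eq_or_ne b (m' k) with rfl | hb2
      · rw [hσ, Equiv.swap_apply_right]
        have := core_add hinj h1 h2 (a := a)
        linarith
      · rw [hσ, Equiv.swap_apply_of_ne_of_ne hb1 hb2]
        rw [bad_fixed_out h1 h2 hb1 hb2, neg_zero]
    have h0 : ∑ b ∈ xᶜ, steinerFun n i m m' (insert (σ b) (x.erase a))
        = ∑ b ∈ xᶜ, steinerFun n i m m' (insert b (x.erase a)) :=
      Finset.sum_equiv σ (fun b => hst b) (fun b _ => rfl)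
    have h1' := Finset.sum_congr rfl key
    rw [Finset.sum_neg_distrib] at h1'
    linarith [h0, h1']

lemma exists_good {w : ℕ} (hinj : Function.Injective (Sum.elim m m'))
    (hiw : i ≤ w) (hwn : w + i ≤ n) :
    ∃ x : Finset (Fin n), x.card = w ∧ steinerFun n i m m' x ≠ 0 := by
  set S := (Finset.image (Sum.elim m m') Finset.univ : Finset (Fin n)) with hS
  have hSc : S.card = i + i := card_S hinj
  have hcompl : w - i ≤ Sᶜ.card := by
    rw [Finset.card_compl, Fintype.card_fin, hSc]
    omega
  obtain ⟨t, hts, htc⟩ := Finset.exists_subset_card_eq hcompl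
  have hdisj : Disjoint (Finset.image m Finset.univ) t := by
    rw [Finset.disjoint_left]
    rintro c hc hct
    rw [Finset.mem_image] at hc
    obtain ⟨j, _, rfl⟩ := hc
    exact (Finset.mem_compl.mp (hts hct)) (mem_S.mpr (Or.inl ⟨j, rfl⟩))
  refine ⟨Finset.image m Finset.univ ∪ t, ?_, ?_⟩
  · rw [Finset.card_union_of_disjoint hdisj,
      Finset.card_image_of_injective _ (m_inj hinj), Finset.card_univ, Fintype.card_fin,
      htc]
    omega
  · have hgood : Good m m' (Finset.image m Finset.univ ∪ t) := by
      intro j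
      refine Or.inl ⟨Finset.mem_union_left _
        (Finset.mem_image.mpr ⟨j, Finset.mem_univ j, rfl⟩), ?_⟩
      intro hmem
      rcases Finset.mem_union.mp hmem with h | h
      · rw [Finset.mem_image] at h
        obtain ⟨l, _, hl⟩ := h
        exact ne_mm' hinj l j hl
      · exact (Finset.mem_compl.mp (hts h)) (mem_S.mpr (Or.inr ⟨j, rfl⟩))
    rw [f_good hgood]
    exact pow_ne_zero _ (by norm_num)

end SteinerAux

theorem steinerFun_eigenfunction (n i w : ℕ) (hiw : i ≤ w) (hwn : w + i ≤ n)
    (m m' : Fin i → Fin n) (hinj : Function.Injective (Sum.elim m m')) :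
    (∀ x : Finset (Fin n), x.card = w →
      ∑ y ∈ univ.filter (fun y : Finset (Fin n) => y.card = w ∧ (x ∩ y).card + 1 = w),
          steinerFun n i m m' y
        = (((w : ℝ) - i) * ((n : ℝ) - w - i) - i) * steinerFun n i m m' x)
    ∧ ∃ x : Finset (Fin n), x.card = w ∧ steinerFun n i m m' x ≠ 0 := by
  constructor
  · intro x hxc
    rw [SteinerAux.neighbor_sum (steinerFun n i m m') hxc]
    by_cases hx : SteinerAux.Good m m' x
    · rw [SteinerAux.f_good hx]
      exact SteinerAux.good_sum hinj hx hxc hiw hwn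
    · rw [SteinerAux.f_bad hx, mul_zero]
      exact SteinerAux.bad_sum hinj hx
  · exact SteinerAux.exists_good hinj hiw hwn
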